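/- For all n ≥ 1 and all m ≥ l ≥ 0, the binomial-operator kernel at (n,1) satisfies C(n,1)(m,l) = Σ_{i=0}^{n−1} F(m+i+1, l+i), i.e., ⟨n 1⟩∗ = ⊞_{i=0}^{n−1} ∗_{i+1,i}. -/

import Mathlib

open Finset

/-- The ψ-factorial: ψₙ! = ψ₁ψ₂⋯ψₙ, with ψ₀! = 1. -/
noncomputable def psiFact (ψ : ℕ → ℂ) : ℕ → ℂ
  | 0 => 1
  | n + 1 => psiFact ψ n * ψ (n + 1)

/-- The ψ-binomial coefficient binomψ(n,k) = ψₙ!/(ψₖ!·ψ_{n−k}!). -/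
noncomputable def psiBinom (ψ : ℕ → ℂ) (n k : ℕ) : ℂ :=
  psiFact ψ n / (psiFact ψ k * psiFact ψ (n - k))

/-- The Fontané numbers F(n,k) = (ψₙ − ψₖ)/ψ_{n−k}. -/
noncomputable def Fker (ψ : ℕ → ℂ) (n k : ℕ) : ℂ :=
  (ψ n - ψ k) / ψ (n - k)

/-- The binomial-operator kernels C(n,k)(m,l) of the binomial operators ⟨n k⟩∗. -/
noncomputable def Cker (ψ : ℕ → ℂ) : ℕ → ℕ → ℕ → ℕ → ℂ
  | _, 0, _, _ => 1
  | 0, _ + 1, _, _ => 0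
  | n + 1, k + 1, m, l =>
      if k = n then ∏ i ∈ Finset.range (n + 1), Fker ψ (m + i + 1) l
      else Cker ψ n (k + 1) (m + 1) (l + 1) + Fker ψ (m + 1) l * Cker ψ n k (m + 1) l

/-- ⟨n 1⟩∗ = ⊞_{i=0}^{n−1} ∗_{i+1,i}:
C(n,1)(m,l) = Σ_{i=0}^{n−1} F(m+i+1, l+i). -/
theorem Cker_n_one (ψ : ℕ → ℂ) (hψ0 : ψ 0 = 0) (hψ1 : ψ 1 = 1) (hψ : ∀ n : ℕ, 1 ≤ n → ψ n ≠ 0)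
    (n : ℕ) (hn : 1 ≤ n) (m l : ℕ) (hlm : l ≤ m) :
    Cker ψ n 1 m l = ∑ i ∈ Finset.range n, Fker ψ (m + i + 1) (l + i) := by
  induction n generalizing m l with
  | zero => omega
  | succ n ih =>
    rcases Nat.eq_zero_or_pos n with rfl | hn'
    · simp [Cker]
    · rw [Cker, if_neg (by omega), ih hn' (m + 1) (l + 1) (by omega),
        Finset.sum_range_succ']
      simp only [Cker, mul_one]
      congr 1
      apply Finset.sum_congr rfl
      intro i _
      rw [show m + 1 + i + 1 = m + (i + 1) + 1 by omega,
        show l + 1 + i = l + (i + 1) by omega]
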